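/- Let m = 2^t p^s with p an odd prime and s ≥ 1, t ≥ 0 integers, and let θ_j = 2 cos(jπ/m) for 1 ≤ j < m. Suppose integers ℓ_1, …, ℓ_{m−1} satisfy Σ_{j=1}^{m−1} ℓ_j θ_j = 0. Then for every j with 1 ≤ j ≤ m − m/p, writing j = q(m/p) + r with 0 ≤ r < m/p, one has ℓ_j = ℓ_{m−j} + (−1)^q (ℓ_{m − m/p + r} − ℓ_{m/p − r}) if r ≠ 0, and ℓ_j = ℓ_{m−j} if r = 0. -/

import Mathlib

open Finset Polynomial Complex

lemma aux_eval (m : ℕ) (hm0 : 0 < m) (ℓ : ℕ → ℤ)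
    (hrel : ∑ j ∈ Finset.Ico 1 m, (ℓ j : ℝ) * (2 * Real.cos (j * Real.pi / m)) = 0) :
    Polynomial.aeval (Complex.exp (2 * Real.pi * Complex.I / (2 * m : ℕ)))
      (∑ j ∈ Finset.Ico 1 m, Polynomial.C ((ℓ j : ℚ)) * (Polynomial.X ^ j + Polynomial.X ^ (2 * m - j))) = 0 := by
  set ζ : ℂ := Complex.exp (2 * Real.pi * Complex.I / (2 * m : ℕ)) with hζ
  have hmC : ((m : ℂ)) ≠ 0 := Nat.cast_ne_zero.mpr hm0.ne'
  have hexp : ∀ n : ℕ, ζ ^ n = Complex.exp (((n * Real.pi / m : ℝ) : ℂ) * Complex.I) := by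
    intro n
    rw [hζ, ← Complex.exp_nat_mul]
    congr 1
    push_cast
    field_simp
  have hprim : IsPrimitiveRoot ζ (2 * m) := Complex.isPrimitiveRoot_exp _ (by positivity)
  have hinv : ∀ n : ℕ, n ≤ 2 * m →
      ζ ^ (2 * m - n) = Complex.exp (-(((n * Real.pi / m : ℝ) : ℂ)) * Complex.I) := by
    intro n hn
    have h1 : ζ ^ (2 * m - n) * ζ ^ n = 1 := by
      rw [← pow_add, Nat.sub_add_cancel hn]
      exact hprim.pow_eq_one
    rw [hexp n] at h1
    rw [eq_inv_of_mul_eq_one_left h1, ← Complex.exp_neg, neg_mul]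
  have hcos : ∀ n : ℕ, n ≤ 2 * m →
      ζ ^ n + ζ ^ (2 * m - n) = ((2 * Real.cos (n * Real.pi / m) : ℝ) : ℂ) := by
    intro n hn
    rw [hexp n, hinv n hn]
    rw [Complex.ofReal_mul, Complex.ofReal_cos, Complex.cos]
    push_cast
    ring
  rw [map_sum]
  have hterm : ∀ j ∈ Finset.Ico 1 m,
      (Polynomial.aeval ζ) (Polynomial.C ((ℓ j : ℚ)) * (Polynomial.X ^ j + Polynomial.X ^ (2 * m - j)))
        = ((((ℓ j : ℝ) * (2 * Real.cos (j * Real.pi / m))) : ℝ) : ℂ) := by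
    intro j hj
    simp only [map_mul, map_add, map_pow, Polynomial.aeval_X, Polynomial.aeval_C]
    rw [hcos j (by simp at hj; omega), eq_ratCast (algebraMap ℚ ℂ)]
    push_cast
    ring
  rw [Finset.sum_congr rfl hterm, ← Complex.ofReal_sum, hrel, Complex.ofReal_zero]

lemma aux_key (p s t m : ℕ) (hp : Nat.Prime p) (hodd : Odd p) (hs : 1 ≤ s)
    (hm : m = 2 ^ t * p ^ s) (ℓ : ℕ → ℤ)
    (hrel : ∑ j ∈ Finset.Ico 1 m, (ℓ j : ℝ) * (2 * Real.cos (j * Real.pi / m)) = 0) :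
    ℓ (m / p) = ℓ (m - m / p) ∧
      ∀ k, m / p < k → k < m → ℓ k + ℓ (k - m / p) = ℓ (m - k) + ℓ (m - (k - m / p)) := by
  obtain ⟨s', rfl⟩ : ∃ s', s = s' + 1 := ⟨s - 1, by omega⟩
  have hm0 : 0 < m := by
    rw [hm]; exact Nat.mul_pos (Nat.pow_pos (by norm_num)) (Nat.pow_pos hp.pos)
  have hp2 : p ≠ 2 := by rintro rfl; obtain ⟨k, hk⟩ := hodd; omega
  have hd : m / p = 2 ^ t * p ^ s' := by
    rw [hm, pow_succ, ← mul_assoc, Nat.mul_div_cancel _ hp.pos]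
  set d : ℕ := m / p with hddef
  have hdp : d * p = m := by rw [hd, hm, pow_succ]; ring
  have hd0 : 0 < d := by
    rw [hd]; exact Nat.mul_pos (Nat.pow_pos (by norm_num)) (Nat.pow_pos hp.pos)
  have hdm : d < m := by
    have h2 : d * 2 ≤ d * p := Nat.mul_le_mul_left d hp.two_le
    omega
  -- ζ and P
  set ζ : ℂ := Complex.exp (2 * Real.pi * Complex.I / (2 * m : ℕ)) with hζ
  set P : Polynomial ℚ :=
    ∑ j ∈ Finset.Ico 1 m, Polynomial.C ((ℓ j : ℚ)) * (Polynomial.X ^ j + Polynomial.X ^ (2 * m - j)) with hP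
  have hPz : Polynomial.aeval ζ P = 0 := aux_eval m hm0 ℓ hrel
  have hprim : IsPrimitiveRoot ζ (2 * m) := Complex.isPrimitiveRoot_exp _ (by positivity)
  -- Φ
  set Φ : Polynomial ℚ := ∑ i ∈ Finset.range p, (-(Polynomial.X ^ d)) ^ i with hΦ
  have key1 : Φ * (Polynomial.X ^ d + 1) = Polynomial.X ^ m + 1 := by
    have h := geom_sum_mul (-(Polynomial.X : Polynomial ℚ) ^ d) p
    rw [hodd.neg_pow, ← pow_mul, hdp] at h
    linear_combination -h
  have hXdm : (Polynomial.X ^ d + 1 : Polynomial ℚ).Monic := by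
    simpa using Polynomial.monic_X_pow_add_C (1 : ℚ) hd0.ne'
  have hXmm : (Polynomial.X ^ m + 1 : Polynomial ℚ).Monic := by
    simpa using Polynomial.monic_X_pow_add_C (1 : ℚ) hm0.ne'
  have hΦm : Φ.Monic := by
    refine Polynomial.Monic.of_mul_monic_right hXdm ?_
    rw [key1]; exact hXmm
  have hdegXd : (Polynomial.X ^ d + 1 : Polynomial ℚ).natDegree = d := by
    simpa using (Polynomial.natDegree_X_pow_add_C (n := d) (r := (1:ℚ)))
  have hdegXm : (Polynomial.X ^ m + 1 : Polynomial ℚ).natDegree = m := by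
    simpa using (Polynomial.natDegree_X_pow_add_C (n := m) (r := (1:ℚ)))
  have hdegΦ : Φ.natDegree = m - d := by
    have := hΦm.natDegree_mul hXdm
    rw [key1, hdegXm, hdegXd] at this
    omega
  -- ζ^m = -1, ζ^d ≠ -1
  have hzm : ζ ^ m = -1 := by
    have h2 : (ζ ^ m - 1) * (ζ ^ m + 1) = 0 := by
      have : ζ ^ (m * 2) = 1 := by rw [mul_comm]; exact hprim.pow_eq_one
      rw [pow_mul] at this
      linear_combination this
    rcases mul_eq_zero.mp h2 with h | h
    · exfalso
      have : (2 * m : ℕ) ∣ m := (hprim.pow_eq_one_iff_dvd m).mp (by linear_combination h)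
      have := Nat.le_of_dvd hm0 this
      omega
    · linear_combination h
  have hzd : ζ ^ d + 1 ≠ 0 := by
    intro h
    have h2 : ζ ^ (2 * d) = 1 := by
      rw [two_mul, pow_add]
      have : ζ ^ d = -1 := by linear_combination h
      rw [this]; ring
    have := Nat.le_of_dvd (by omega) ((hprim.pow_eq_one_iff_dvd (2 * d)).mp h2)
    omega
  have hΦζ : Polynomial.aeval ζ Φ = 0 := by
    have := congrArg (Polynomial.aeval ζ) key1
    simp only [map_mul, map_add, map_pow, map_one, Polynomial.aeval_X] at this
    rw [hzm] at this
    have h0 : Polynomial.aeval ζ Φ * (ζ ^ d + 1) = 0 := by linear_combination this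
    exact (mul_eq_zero.mp h0).resolve_right hzd
  -- minpoly = Φ
  have hζint : IsIntegral ℚ ζ := (hprim.isIntegral (by positivity)).tower_top
  have hminmonic : (minpoly ℚ ζ).Monic := minpoly.monic hζint
  have htot : Nat.totient (2 * m) = m - d := by
    have hco : Nat.Coprime (2 ^ (t + 1)) (p ^ (s' + 1)) :=
      Nat.Coprime.pow _ _ ((Nat.coprime_primes Nat.prime_two hp).mpr (fun h => hp2 h.symm))
    have h2m : 2 * m = 2 ^ (t + 1) * p ^ (s' + 1) := by rw [hm]; ring
    rw [h2m, Nat.totient_mul hco, Nat.totient_prime_pow_succ Nat.prime_two,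
      Nat.totient_prime_pow_succ hp]
    have hpd : p * d = m := by rw [mul_comm]; exact hdp
    have hps : p - 1 + 1 = p := Nat.succ_pred_eq_of_pos hp.pos
    have h1 : d * (p - 1) + d = m := by
      rw [← hdp]
      conv_rhs => rw [← hps]
      ring
    have h2 : (2 : ℕ) - 1 = 1 := rfl
    have h3 : 2 ^ t * (2 - 1) * (p ^ s' * (p - 1)) = d * (p - 1) := by
      rw [h2, mul_one, hd]; ring
    omega
  have hdegmin : (minpoly ℚ ζ).natDegree = m - d := by
    rw [← Polynomial.cyclotomic_eq_minpoly_rat hprim (by positivity),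
      Polynomial.natDegree_cyclotomic, htot]
  have hΦeq : minpoly ℚ ζ = Φ := by
    obtain ⟨c, hc⟩ := minpoly.dvd ℚ ζ hΦζ
    have hcm : c.Monic := hminmonic.of_mul_monic_left (by rw [← hc]; exact hΦm)
    have hdeg : Φ.natDegree = (minpoly ℚ ζ).natDegree + c.natDegree := by
      rw [hc]; exact hminmonic.natDegree_mul hcm
    have : c.natDegree = 0 := by omega
    rw [Polynomial.Monic.natDegree_eq_zero hcm |>.mp this, mul_one] at hc
    exact hc.symm
  obtain ⟨Q, hPQ⟩ : Φ ∣ P := hΦeq ▸ minpoly.dvd ℚ ζ hPz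
  -- coefficients of P
  have hA : ∀ n, 1 ≤ n → n < m → P.coeff n = (ℓ n : ℚ) := by
    intro n h1 h2
    rw [hP, Polynomial.finset_sum_coeff]
    rw [Finset.sum_eq_single n]
    · rw [Polynomial.coeff_C_mul, Polynomial.coeff_add, Polynomial.coeff_X_pow,
        Polynomial.coeff_X_pow, if_pos rfl, if_neg (show ¬n = 2 * m - n by omega)]
      ring
    · intro j hj hjn
      simp only [Finset.mem_Ico] at hj
      rw [Polynomial.coeff_C_mul, Polynomial.coeff_add, Polynomial.coeff_X_pow,
        Polynomial.coeff_X_pow, if_neg (show ¬n = j by omega),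
        if_neg (show ¬n = 2 * m - j by omega)]
      ring
    · intro h; exact absurd (Finset.mem_Ico.mpr ⟨h1, h2⟩) h
  have hB : ∀ n, m < n → n < 2 * m → P.coeff n = (ℓ (2 * m - n) : ℚ) := by
    intro n h1 h2
    rw [hP, Polynomial.finset_sum_coeff]
    rw [Finset.sum_eq_single (2 * m - n)]
    · rw [Polynomial.coeff_C_mul, Polynomial.coeff_add, Polynomial.coeff_X_pow,
        Polynomial.coeff_X_pow, if_neg (show ¬n = 2 * m - n by omega),
        if_pos (show n = 2 * m - (2 * m - n) by omega)]
      ring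
    · intro j hj hjn
      simp only [Finset.mem_Ico] at hj
      rw [Polynomial.coeff_C_mul, Polynomial.coeff_add, Polynomial.coeff_X_pow,
        Polynomial.coeff_X_pow, if_neg (show ¬n = j by omega),
        if_neg (show ¬n = 2 * m - j by omega)]
      ring
    · intro h
      exact absurd (Finset.mem_Ico.mpr ⟨by omega, by omega⟩) h
  have hC0 : P.coeff 0 = 0 := by
    rw [hP, Polynomial.finset_sum_coeff]
    apply Finset.sum_eq_zero
    intro j hj
    simp only [Finset.mem_Ico] at hj
    rw [Polynomial.coeff_C_mul, Polynomial.coeff_add, Polynomial.coeff_X_pow,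
      Polynomial.coeff_X_pow, if_neg (show ¬0 = j by omega),
      if_neg (show ¬0 = 2 * m - j by omega)]
    ring
  have hCm : P.coeff m = 0 := by
    rw [hP, Polynomial.finset_sum_coeff]
    apply Finset.sum_eq_zero
    intro j hj
    simp only [Finset.mem_Ico] at hj
    rw [Polynomial.coeff_C_mul, Polynomial.coeff_add, Polynomial.coeff_X_pow,
      Polynomial.coeff_X_pow, if_neg (show ¬m = j by omega),
      if_neg (show ¬m = 2 * m - j by omega)]
    ring
  -- degree bound on Q
  have hdegP : P.natDegree ≤ 2 * m - 1 := by
    rw [hP]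
    apply Polynomial.natDegree_sum_le_of_forall_le
    intro j hj
    simp only [Finset.mem_Ico] at hj
    apply le_trans (Polynomial.natDegree_C_mul_le _ _)
    apply le_trans (Polynomial.natDegree_add_le _ _)
    simp only [Polynomial.natDegree_X_pow]
    omega
  have hQc : ∀ k, d ≤ k → Q.coeff (k + m) = 0 := by
    intro k hk
    rcases eq_or_ne Q 0 with h0 | h0
    · simp [h0]
    apply Polynomial.coeff_eq_zero_of_natDegree_lt
    have hP0 : P ≠ 0 := by
      intro h
      rw [h] at hPQ
      exact h0 (by
        rcases mul_eq_zero.mp hPQ.symm with h | h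
        · exact absurd h hΦm.ne_zero
        · exact h)
    have := Polynomial.natDegree_mul hΦm.ne_zero h0
    rw [← hPQ, hdegΦ] at this
    omega
  -- the key coefficient identity
  have hXP : (Polynomial.X ^ d + 1) * P = (Polynomial.X ^ m + 1) * Q := by
    rw [hPQ, ← key1]; ring
  have hkey : ∀ k, d ≤ k → k < m →
      P.coeff k + P.coeff (k - d) = P.coeff (k + m) + P.coeff (k + m - d) := by
    intro k hk hkm
    have e1 := congrArg (fun (f : Polynomial ℚ) => f.coeff k) hXP
    have e2 := congrArg (fun (f : Polynomial ℚ) => f.coeff (k + m)) hXP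
    simp only [add_mul, one_mul, Polynomial.coeff_add, mul_comm (Polynomial.X ^ d : Polynomial ℚ),
      mul_comm (Polynomial.X ^ m : Polynomial ℚ), Polynomial.coeff_mul_X_pow'] at e1 e2
    rw [if_pos hk, if_neg (by omega)] at e1
    rw [if_pos (by omega), if_pos (by omega)] at e2
    rw [hQc k hk] at e2
    have e3 : k + m - m = k := by omega
    rw [e3] at e2
    linarith [e1, e2]
  constructor
  · have h := hkey d le_rfl hdm
    rw [hA d hd0 hdm, Nat.sub_self, hC0, hB (d + m) (by omega) (by omega),
      show d + m - d = m by omega, hCm] at h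
    have e : (2 * m - (d + m)) = m - d := by omega
    rw [e] at h
    have : (ℓ d : ℚ) = (ℓ (m - d) : ℚ) := by linarith
    exact_mod_cast this
  · intro k h1 h2
    have h := hkey k (by omega) h2
    rw [hA k (by omega) h2, hA (k - d) (by omega) (by omega),
      hB (k + m) (by omega) (by omega), hB (k + m - d) (by omega) (by omega)] at h
    have e1 : 2 * m - (k + m) = m - k := by omega
    have e2 : 2 * m - (k + m - d) = m - (k - d) := by omega
    rw [e1, e2] at h
    exact_mod_cast h

theorem stmt7 (p s t m : ℕ) (hp : Nat.Prime p) (hodd : Odd p) (hs : 1 ≤ s)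
    (hm : m = 2 ^ t * p ^ s) (ℓ : ℕ → ℤ)
    (hrel : ∑ j ∈ Finset.Ico 1 m, (ℓ j : ℝ) * (2 * Real.cos (j * Real.pi / m)) = 0)
    (j q r : ℕ) (hj1 : 1 ≤ j) (hj2 : j ≤ m - m / p)
    (hqr : j = q * (m / p) + r) (hr : r < m / p) :
    (r ≠ 0 → ℓ j = ℓ (m - j) + (-1) ^ q * (ℓ (m - m / p + r) - ℓ (m / p - r))) ∧
    (r = 0 → ℓ j = ℓ (m - j)) := by
  obtain ⟨hbase, hrec⟩ := aux_key p s t m hp hodd hs hm ℓ hrel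
  have hm0 : 0 < m := by
    rw [hm]; exact Nat.mul_pos (Nat.pow_pos (by norm_num)) (Nat.pow_pos hp.pos)
  have hpm : p ∣ m := by
    rw [hm]; exact Dvd.dvd.mul_left (dvd_pow_self p (by omega)) _
  set d : ℕ := m / p with hd
  have hdp : d * p = m := Nat.div_mul_cancel hpm
  have hd0 : 0 < d := Nat.div_pos (Nat.le_of_dvd hm0 hpm) hp.pos
  have hdm : d < m := Nat.div_lt_self hm0 hp.one_lt
  set F : ℕ → ℤ := fun k => ℓ k - ℓ (m - k) with hFset
  have hFdef : ∀ k, F k = ℓ k - ℓ (m - k) := fun k => rfl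
  have hFrec : ∀ k, d < k → k < m → F k = -F (k - d) := by
    intro k h1 h2
    have := hrec k h1 h2
    rw [hFdef, hFdef]
    omega
  have hFd : F d = 0 := by rw [hFdef]; omega
  have hind1 : ∀ q', 1 ≤ q' → q' * d < m → F (q' * d) = 0 := by
    intro q'
    induction q' with
    | zero => omega
    | succ n ih =>
      intro _ hlt
      have hsm : (n + 1) * d = n * d + d := Nat.succ_mul n d
      rcases Nat.eq_zero_or_pos n with hn | hn
      · subst hn; simpa using hFd
      · have hnd : d ≤ n * d := Nat.le_mul_of_pos_left d hn
        rw [show (n + 1) * d = n * d + d by omega,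
          hFrec (n * d + d) (by omega) (by omega), show n * d + d - d = n * d by omega,
          ih hn (by omega)]
        ring
  have hind2 : ∀ q' r', 1 ≤ r' → r' < d → q' * d + r' < m →
      F (q' * d + r') = (-1) ^ q' * F r' := by
    intro q'
    induction q' with
    | zero => intro r' _ _ _; simp
    | succ n ih =>
      intro r' hr1 hr2 hlt
      have hsm : (n + 1) * d = n * d + d := Nat.succ_mul n d
      rw [show (n + 1) * d + r' = (n * d + r') + d by omega,
        hFrec ((n * d + r') + d) (by omega) (by omega),
        show (n * d + r') + d - d = n * d + r' by omega,
        ih r' hr1 hr2 (by omega)]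
      ring
  have hjm : j < m := by omega
  constructor
  · intro hr0
    have hr1 : 1 ≤ r := by omega
    have h1 : F j = (-1) ^ q * F r := by
      rw [hqr]
      exact hind2 q r hr1 hr (by omega)
    have hpd : p * d = m := by rw [mul_comm]; exact hdp
    have hps : p - 1 + 1 = p := Nat.succ_pred_eq_of_pos hp.pos
    have hmd' : (p - 1) * d + d = p * d := by
      conv_rhs => rw [← hps]
      ring
    have hmd : (p - 1) * d = m - d := by omega
    have h2 : F (m - d + r) = F r := by
      rw [show m - d + r = (p - 1) * d + r by omega,
        hind2 (p - 1) r hr1 hr (by omega)]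
      have hev : Even (p - 1) := Nat.Odd.sub_odd hodd odd_one
      rw [hev.neg_one_pow, one_mul]
    have h4 : F j = (-1) ^ q * F (m - d + r) := by rw [h1, h2]
    rw [hFdef, hFdef, show m - (m - d + r) = d - r by omega] at h4
    linarith [h4]
  · intro hr0
    subst hr0
    have hq1 : 1 ≤ q := by
      rcases Nat.eq_zero_or_pos q with h | h
      · subst h; simp at hqr; omega
      · exact h
    have := hind1 q hq1 (by omega)
    rw [show q * d = j by omega, hFdef] at this
    omega
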